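/- Let p > 3 and n ≥ 1. Define the auxiliary polynomial p_{n,k}(x) = k·Σ_{j≥0} C(n,2j+1)·x^j − (k−2)·Σ_{j≥0} C(n,2j)·x^j. Then for every x in F_q, D_{n,k}(1,x) = (1/2^n)·p_{n,k}(1−4x). -/
import Mathlib


open Finset

/-- The `n`-th reversed Dickson polynomial of the `(k+1)`-th kind, evaluated at `(a, x)`.
For `n ≥ 1` it is `∑_{i=0}^{⌊n/2⌋} ((n-ki)/(n-i))·C(n-i,i)·(-x)^i·a^{n-2i}`, where the
integer coefficient `((n-ki)/(n-i))·C(n-i,i)` is written as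
`k·C(n-i,i) - (k-1)·(n/(n-i))·C(n-i,i)` and `(n/(n-i))·C(n-i,i) = C(n-i,i) + C(n-i-1,i-1)`
(equal to `1` when `i = 0`). For `n = 0` it is `2 - k`. -/
noncomputable def revDickson {F : Type*} [Field F] (k : ℤ) (n : ℕ) (a x : F) : F :=
  if n = 0 then ((2 - k : ℤ) : F) else
    ∑ i ∈ Finset.range (n / 2 + 1),
      ((k * ((n - i).choose i : ℤ) -
          (k - 1) * (if i = 0 then 1 else ((n - i).choose i : ℤ) + ((n - i - 1).choose (i - 1) : ℤ))) : F)
        * (-x) ^ i * a ^ (n - 2 * i)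

/-- The auxiliary polynomial `p_{n,k}(x) = k·Σ_j C(n,2j+1)x^j - (k-2)·Σ_j C(n,2j)x^j`. -/
noncomputable def pAux {F : Type*} [Field F] (k : ℤ) (n : ℕ) (x : F) : F :=
  (k : F) * ∑ j ∈ Finset.range (n / 2 + 1), (n.choose (2 * j + 1) : F) * x ^ j
    - ((k : F) - 2) * ∑ j ∈ Finset.range (n / 2 + 1), (n.choose (2 * j) : F) * x ^ j

/-! ### Auxiliary development -/

/-- The `i`-th coefficient of the reversed Dickson polynomial of the `(k+1)`-th kind. -/
def dcoef (k : ℤ) (n i : ℕ) : ℤ :=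
  k * ((n - i).choose i : ℤ) -
    (k - 1) * (if i = 0 then 1 else ((n - i).choose i : ℤ) + ((n - i - 1).choose (i - 1) : ℤ))

lemma pascal' (a b : ℕ) (h : a = 0 → 1 ≤ b) :
    a.choose (b + 1) = (a - 1).choose (b + 1) + (a - 1).choose b := by
  cases a with
  | zero =>
    obtain ⟨c, rfl⟩ : ∃ c, b = c + 1 := ⟨b - 1, by omega⟩
    simp
  | succ m =>
    simp [Nat.choose_succ_succ]
    omega

lemma dcoef_zero' (k : ℤ) (n : ℕ) : dcoef k n 0 = 1 := by
  simp [dcoef]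

lemma dcoef_eq_zero (k : ℤ) {n i : ℕ} (hn : 2 ≤ n) (hi : n < 2 * i) : dcoef k n i = 0 := by
  have h0 : i ≠ 0 := by omega
  have h1 : (n - i).choose i = 0 := Nat.choose_eq_zero_of_lt (by omega)
  have h2 : (n - i - 1).choose (i - 1) = 0 := Nat.choose_eq_zero_of_lt (by omega)
  simp [dcoef, h0, h1, h2]

lemma dcoef_rec (k : ℤ) {n : ℕ} (hn : 2 ≤ n) (i : ℕ) :
    dcoef k (n + 2) (i + 1) = dcoef k (n + 1) (i + 1) + dcoef k n i := by
  cases i with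
  | zero =>
    simp only [dcoef, if_neg (Nat.succ_ne_zero 0), if_pos rfl,
      show n + 2 - 1 = n + 1 by omega, show n + 1 - 1 = n by omega,
      show n + 2 - 1 - 1 = n by omega, show n + 1 - 1 - 1 = n - 1 by omega,
      show (1 : ℕ) - 1 = 0 by omega, Nat.choose_one_right, Nat.choose_zero_right,
      show n - 0 = n by omega]
    push_cast [Nat.choose_one_right]
    ring
  | succ j =>
    have hA : (n - j).choose (j + 2) = (n - j - 1).choose (j + 2) + (n - j - 1).choose (j + 1) :=
      pascal' (n - j) (j + 1) (fun _ => by omega)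
    have hC : (n - j - 1).choose (j + 1) = (n - j - 2).choose (j + 1) + (n - j - 2).choose j := by
      have := pascal' (n - j - 1) j (fun h => by omega)
      simpa [show n - j - 1 - 1 = n - j - 2 by omega] using this
    simp only [dcoef, if_neg (Nat.succ_ne_zero _),
      show n + 2 - (j + 1 + 1) = n - j by omega,
      show n + 2 - (j + 1 + 1) - 1 = n - j - 1 by omega,
      show n + 1 - (j + 1 + 1) = n - j - 1 by omega,
      show n + 1 - (j + 1 + 1) - 1 = n - j - 2 by omega,
      show n - (j + 1) = n - j - 1 by omega,
      show n - (j + 1) - 1 = n - j - 2 by omega,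
      show j + 1 + 1 - 1 = j + 1 by omega,
      show j + 1 - 1 = j by omega,
      show n - j - 1 - 1 = n - j - 2 by omega]
    rw [hA, hC]
    push_cast
    ring

/-- The reversed Dickson sum, extended over the range `0 ≤ i ≤ n`. -/
noncomputable def W {F : Type*} [Field F] (k : ℤ) (n : ℕ) (x : F) : F :=
  ∑ i ∈ Finset.range (n + 1), ((dcoef k n i : ℤ) : F) * (-x) ^ i

lemma revD_sum {F : Type*} [Field F] (k : ℤ) (n : ℕ) (hn : n ≠ 0) (x : F) :
    revDickson k n 1 x = ∑ i ∈ Finset.range (n / 2 + 1), ((dcoef k n i : ℤ) : F) * (-x) ^ i := by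
  rw [revDickson, if_neg hn]
  refine Finset.sum_congr rfl fun i _ => ?_
  simp only [dcoef, one_pow, mul_one]
  push_cast [apply_ite (Int.cast : ℤ → F)]
  ring

lemma revD_eq_W {F : Type*} [Field F] (k : ℤ) {n : ℕ} (hn : 2 ≤ n) (x : F) :
    revDickson k n 1 x = W k n x := by
  rw [revD_sum k n (by omega) x, W]
  refine Finset.sum_subset ?_ ?_
  · intro i hi
    simp only [Finset.mem_range] at *
    omega
  · intro i hi1 hi2
    simp only [Finset.mem_range] at hi1 hi2
    rw [dcoef_eq_zero k hn (by omega)]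
    simp

lemma W_rec {F : Type*} [Field F] (k : ℤ) {n : ℕ} (hn : 2 ≤ n) (x : F) :
    W k (n + 2) x = W k (n + 1) x - x * W k n x := by
  have h1 : W k (n + 2) x
      = 1 + ∑ i ∈ Finset.range (n + 2), ((dcoef k (n + 2) (i + 1) : ℤ) : F) * (-x) ^ (i + 1) := by
    rw [W, Finset.sum_range_succ', dcoef_zero']
    push_cast
    ring
  have h2 : W k (n + 1) x
      = 1 + ∑ i ∈ Finset.range (n + 2), ((dcoef k (n + 1) (i + 1) : ℤ) : F) * (-x) ^ (i + 1) := by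
    rw [W, Finset.sum_range_succ', dcoef_zero']
    have : ∑ i ∈ Finset.range (n + 2), ((dcoef k (n + 1) (i + 1) : ℤ) : F) * (-x) ^ (i + 1)
        = ∑ i ∈ Finset.range (n + 1), ((dcoef k (n + 1) (i + 1) : ℤ) : F) * (-x) ^ (i + 1) := by
      rw [Finset.sum_range_succ, dcoef_eq_zero k (show 2 ≤ n + 1 by omega) (by omega)]
      simp
    rw [this]
    push_cast
    ring
  have h3 : x * W k n x
      = - ∑ i ∈ Finset.range (n + 2), ((dcoef k n i : ℤ) : F) * (-x) ^ (i + 1) := by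
    rw [W, Finset.mul_sum]
    have : ∑ i ∈ Finset.range (n + 2), ((dcoef k n i : ℤ) : F) * (-x) ^ (i + 1)
        = ∑ i ∈ Finset.range (n + 1), ((dcoef k n i : ℤ) : F) * (-x) ^ (i + 1) := by
      rw [Finset.sum_range_succ, dcoef_eq_zero k hn (by omega)]
      simp
    rw [this, ← Finset.sum_neg_distrib]
    exact Finset.sum_congr rfl fun i _ => by ring
  have key : ∑ i ∈ Finset.range (n + 2), ((dcoef k (n + 2) (i + 1) : ℤ) : F) * (-x) ^ (i + 1)
      = (∑ i ∈ Finset.range (n + 2), ((dcoef k (n + 1) (i + 1) : ℤ) : F) * (-x) ^ (i + 1))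
        + ∑ i ∈ Finset.range (n + 2), ((dcoef k n i : ℤ) : F) * (-x) ^ (i + 1) := by
    rw [← Finset.sum_add_distrib]
    refine Finset.sum_congr rfl fun i _ => ?_
    rw [dcoef_rec k hn i]
    push_cast
    ring
  rw [h1, h2, h3, key]
  ring

lemma revDickson_rec {F : Type*} [Field F] (k : ℤ) {n : ℕ} (hn : 2 ≤ n) (x : F) :
    revDickson k (n + 2) 1 x = revDickson k (n + 1) 1 x - x * revDickson k n 1 x := by
  rw [revD_eq_W k (show 2 ≤ n + 2 by omega) x, revD_eq_W k (show 2 ≤ n + 1 by omega) x,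
    revD_eq_W k hn x, W_rec k hn x]

/-- The even binomial sum, extended over the range `0 ≤ j ≤ n`. -/
noncomputable def Tn {F : Type*} [Field F] (n : ℕ) (u : F) : F :=
  ∑ j ∈ Finset.range (n + 1), (n.choose (2 * j) : F) * u ^ j

/-- The odd binomial sum, extended over the range `0 ≤ j ≤ n`. -/
noncomputable def Vn {F : Type*} [Field F] (n : ℕ) (u : F) : F :=
  ∑ j ∈ Finset.range (n + 1), (n.choose (2 * j + 1) : F) * u ^ j

lemma pAux_eq {F : Type*} [Field F] (k : ℤ) (n : ℕ) (u : F) :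
    pAux k n u = (k : F) * Vn n u - ((k : F) - 2) * Tn n u := by
  have e1 : ∑ j ∈ Finset.range (n / 2 + 1), (n.choose (2 * j + 1) : F) * u ^ j = Vn n u := by
    refine Finset.sum_subset (fun j hj => ?_) (fun j hj1 hj2 => ?_)
    · simp only [Finset.mem_range] at *; omega
    · simp only [Finset.mem_range] at hj1 hj2
      rw [Nat.choose_eq_zero_of_lt (by omega)]
      simp
  have e0 : ∑ j ∈ Finset.range (n / 2 + 1), (n.choose (2 * j) : F) * u ^ j = Tn n u := by
    refine Finset.sum_subset (fun j hj => ?_) (fun j hj1 hj2 => ?_)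
    · simp only [Finset.mem_range] at *; omega
    · simp only [Finset.mem_range] at hj1 hj2
      rw [Nat.choose_eq_zero_of_lt (by omega)]
      simp
  rw [pAux, e1, e0]

lemma V_succ {F : Type*} [Field F] (n : ℕ) (u : F) :
    Vn (n + 1) u = Vn n u + Tn n u := by
  rw [Vn]
  rw [Finset.sum_range_succ, Nat.choose_eq_zero_of_lt (show n + 1 < 2 * (n + 1) + 1 by omega)]
  simp only [Nat.cast_zero, zero_mul, add_zero]
  rw [Vn, Tn, ← Finset.sum_add_distrib]
  refine Finset.sum_congr rfl fun j _ => ?_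
  rw [Nat.choose_succ_succ n (2 * j)]
  push_cast
  ring

lemma T_succ {F : Type*} [Field F] (n : ℕ) (u : F) :
    Tn (n + 1) u = Tn n u + u * Vn n u := by
  have hT : Tn n u = 1 + ∑ j ∈ Finset.range (n + 1), (n.choose (2 * j + 2) : F) * u ^ (j + 1) := by
    have htop : ∑ j ∈ Finset.range (n + 1), (n.choose (2 * j + 2) : F) * u ^ (j + 1)
        = ∑ j ∈ Finset.range n, (n.choose (2 * j + 2) : F) * u ^ (j + 1) := by
      rw [Finset.sum_range_succ, Nat.choose_eq_zero_of_lt (by omega)]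
      simp
    rw [Tn, Finset.sum_range_succ', htop]
    simp only [Nat.mul_zero, Nat.choose_zero_right, Nat.cast_one, pow_zero, mul_one]
    have : ∀ j, 2 * (j + 1) = 2 * j + 2 := fun j => by ring
    rw [Finset.sum_congr rfl fun j _ => by rw [this j]]
    ring
  rw [Tn, Finset.sum_range_succ']
  simp only [Nat.mul_zero, Nat.choose_zero_right, Nat.cast_one, pow_zero, mul_one]
  have step : ∀ j, ((n + 1).choose (2 * (j + 1)) : F) * u ^ (j + 1)
      = (n.choose (2 * j + 1) : F) * u ^ (j + 1) + (n.choose (2 * j + 2) : F) * u ^ (j + 1) := by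
    intro j
    rw [show 2 * (j + 1) = (2 * j + 1) + 1 by ring, Nat.choose_succ_succ]
    push_cast
    ring
  rw [Finset.sum_congr rfl fun j _ => step j, Finset.sum_add_distrib, hT]
  rw [Vn, Finset.mul_sum]
  have : ∑ j ∈ Finset.range (n + 1), u * ((n.choose (2 * j + 1) : F) * u ^ j)
      = ∑ j ∈ Finset.range (n + 1), (n.choose (2 * j + 1) : F) * u ^ (j + 1) := by
    refine Finset.sum_congr rfl fun j _ => by ring
  rw [this]
  ring

lemma pAux_rec {F : Type*} [Field F] (k : ℤ) (n : ℕ) (u : F) :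
    pAux k (n + 2) u = 2 * pAux k (n + 1) u - (1 - u) * pAux k n u := by
  rw [pAux_eq, pAux_eq, pAux_eq, show n + 2 = (n + 1) + 1 by omega, T_succ, V_succ,
    T_succ, V_succ]
  ring

theorem stmt_16 {F : Type*} [Field F] [Fintype F] {p : ℕ} [CharP F p]
    (hp : p.Prime) (h3 : 3 < p) (k : ℤ) (n : ℕ) (hn : 1 ≤ n) (x : F) :
    revDickson k n 1 x = 1 / 2 ^ n * pAux k n (1 - 4 * x) := by
  have h2 : (2 : F) ≠ 0 := by
    intro h
    have h' : ((2 : ℕ) : F) = 0 := by push_cast; exact h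
    have := (CharP.cast_eq_zero_iff F p 2).mp h'
    have := Nat.le_of_dvd (by norm_num) this
    omega
  have h4 : (4 : F) ≠ 0 := by
    rw [show (4 : F) = 2 * 2 by norm_num]; exact mul_ne_zero h2 h2
  have h8 : (8 : F) ≠ 0 := by
    rw [show (8 : F) = 2 * (2 * 2) by norm_num]; exact mul_ne_zero h2 (mul_ne_zero h2 h2)
  revert hn
  induction n using Nat.strong_induction_on with
  | _ n ih =>
    match n with
    | 0 => intro h; omega
    | 1 =>
      intro _
      rw [revDickson, pAux]
      norm_num [Finset.sum_range_succ]
      field_simp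
    | 2 =>
      intro _
      rw [revDickson, pAux]
      norm_num [Finset.sum_range_succ]
      field_simp [h4]
      ring
    | 3 =>
      intro _
      rw [revDickson, pAux]
      norm_num [Finset.sum_range_succ]
      field_simp [h8]
      ring
    | (m + 4) =>
      intro _
      have ih1 := ih (m + 3) (by omega) (by omega)
      have ih2 := ih (m + 2) (by omega) (by omega)
      have hrec := revDickson_rec k (show 2 ≤ m + 2 by omega) x
      rw [show m + 2 + 2 = m + 4 by omega] at hrec
      have prec := pAux_rec k (m + 2) (1 - 4 * x)
      rw [show m + 2 + 2 = m + 4 by omega] at prec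
      rw [hrec, ih1, ih2, prec]
      have hpow : (2 : F) ^ (m + 2) ≠ 0 := pow_ne_zero _ h2
      field_simp
      ring
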